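/- Let n ∈ ℕ, let A be a real symmetric n×n matrix all of whose eigenvalues are less than or equal to −γ for some γ > 0, and let B be a real n×R matrix. Suppose V : ℝ → Matrix(n,n,ℝ) is differentiable and satisfies V'(t) = A · V(t) + V(t) · Aᵀ + B·Bᵀ for all t ≥ 0, and V* satisfies A · V* + V* · Aᵀ + B·Bᵀ = 0. Then for all t ≥ 0, ‖V(t) − V*‖₂ ≤ e^{−2γt} · ‖V(0) − V*‖₂. -/

import Mathlib

open Matrix

/-- The spectral norm (`2`-norm) of a real square matrix: its operator norm as a linear
map between Euclidean (`ℓ²`) spaces. -/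
noncomputable def specNorm {n : ℕ} (M : Matrix (Fin n) (Fin n) ℝ) : ℝ :=
  ‖Matrix.toEuclideanCLM (𝕜 := ℝ) M‖

section Aux

open scoped Matrix.Norms.L2Operator
open NormedSpace

variable {n : ℕ}

lemma specNorm_eq_norm (M : Matrix (Fin n) (Fin n) ℝ) : specNorm M = ‖M‖ := rfl

lemma matNorm_one_le : ‖(1 : Matrix (Fin n) (Fin n) ℝ)‖ ≤ 1 := by
  rw [Matrix.cstar_norm_def, _root_.map_one]
  exact ContinuousLinearMap.norm_id_le

lemma matNorm_unitary_le {U : Matrix (Fin n) (Fin n) ℝ}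
    (hU : U ∈ Matrix.unitaryGroup (Fin n) ℝ) : ‖U‖ ≤ 1 := by
  have h1 : star U * U = 1 := (Unitary.mem_iff.mp hU).1
  have h2 : ‖U‖ * ‖U‖ = ‖star U * U‖ := (CStarRing.norm_star_mul_self).symm
  rw [h1] at h2
  nlinarith [norm_nonneg U, matNorm_one_le (n := n)]

lemma matNorm_diagonal_le {d : Fin n → ℝ} {c : ℝ} (hc : 0 ≤ c) (h : ∀ i, |d i| ≤ c) :
    ‖(Matrix.diagonal d : Matrix (Fin n) (Fin n) ℝ)‖ ≤ c := by
  rw [Matrix.cstar_norm_def]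
  refine ContinuousLinearMap.opNorm_le_bound _ hc fun x => ?_
  have h0 : ∀ i, (toEuclideanCLM (𝕜 := ℝ) (Matrix.diagonal d) x) i = d i * x i := by
    intro i
    have h1 := congrFun (congrArg (fun v => (v : Fin n → ℝ))
      (Matrix.ofLp_toEuclideanCLM (𝕜 := ℝ) (Matrix.diagonal d) x)) i
    simpa [Matrix.toLin'_apply, Matrix.mulVec_diagonal] using h1
  rw [EuclideanSpace.norm_eq, EuclideanSpace.norm_eq]
  have key : ∀ i : Fin n, ‖(toEuclideanCLM (𝕜 := ℝ) (Matrix.diagonal d) x) i‖ ^ 2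
      ≤ c ^ 2 * ‖x i‖ ^ 2 := by
    intro i
    rw [h0 i]
    have := h i
    have := abs_nonneg (d i)
    simp only [Real.norm_eq_abs, abs_mul]
    have hx := abs_nonneg (x i)
    rw [mul_pow]
    exact mul_le_mul_of_nonneg_right (by nlinarith) (sq_nonneg _)
  calc Real.sqrt (∑ i, ‖(toEuclideanCLM (𝕜 := ℝ) (Matrix.diagonal d) x) i‖ ^ 2)
      ≤ Real.sqrt (∑ i, c ^ 2 * ‖x i‖ ^ 2) := by
        apply Real.sqrt_le_sqrt
        exact Finset.sum_le_sum fun i _ => key i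
    _ = c * Real.sqrt (∑ i, ‖x i‖ ^ 2) := by
        rw [← Finset.mul_sum, Real.sqrt_mul (by positivity), Real.sqrt_sq hc]

lemma matNorm_exp_le {γ : ℝ} {A : Matrix (Fin n) (Fin n) ℝ}
    (hA : A.IsHermitian) (heig : ∀ k, hA.eigenvalues k ≤ -γ) {t : ℝ} (ht : 0 ≤ t) :
    ‖exp (t • A)‖ ≤ Real.exp (-γ * t) := by
  set U : Matrix (Fin n) (Fin n) ℝ := (hA.eigenvectorUnitary : Matrix (Fin n) (Fin n) ℝ) with hU
  have hUmem : U ∈ Matrix.unitaryGroup (Fin n) ℝ := (hA.eigenvectorUnitary).2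
  have hUstar : star U * U = 1 := (Unitary.mem_iff.mp hUmem).1
  have hUunit : IsUnit U := ⟨Unitary.toUnits hA.eigenvectorUnitary, rfl⟩
  have hUinv : U⁻¹ = star U := Matrix.inv_eq_left_inv hUstar
  have hspec : A = U * Matrix.diagonal hA.eigenvalues * U⁻¹ := by
    rw [hUinv]
    have h := hA.spectral_theorem
    simpa using h
  have hsmul : t • A = U * Matrix.diagonal (fun i => t * hA.eigenvalues i) * U⁻¹ := by
    conv_lhs => rw [hspec]
    rw [← smul_mul_assoc, ← mul_smul_comm, ← Matrix.diagonal_smul]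
    rfl
  have hexp : exp (t • A)
      = U * Matrix.diagonal (fun i => Real.exp (t * hA.eigenvalues i)) * U⁻¹ := by
    rw [hsmul, Matrix.exp_conj U _ hUunit, Matrix.exp_diagonal]
    have hfun : (exp fun i => t * hA.eigenvalues i)
        = fun i => Real.exp (t * hA.eigenvalues i) := by
      funext i
      rw [Pi.coe_exp]
      exact (congrFun Real.exp_eq_exp_ℝ _).symm
    rw [hfun]
  rw [hexp, hUinv]
  have hd : ‖Matrix.diagonal (fun i => Real.exp (t * hA.eigenvalues i))‖
      ≤ Real.exp (-γ * t) := by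
    apply matNorm_diagonal_le (Real.exp_nonneg _)
    intro i
    rw [abs_of_nonneg (Real.exp_nonneg _)]
    apply Real.exp_le_exp.mpr
    calc t * hA.eigenvalues i ≤ t * (-γ) := mul_le_mul_of_nonneg_left (heig i) ht
      _ = -γ * t := by ring
  calc ‖U * Matrix.diagonal (fun i => Real.exp (t * hA.eigenvalues i)) * star U‖
      ≤ ‖U * Matrix.diagonal (fun i => Real.exp (t * hA.eigenvalues i))‖ * ‖star U‖ :=
        norm_mul_le _ _
    _ ≤ ‖U‖ * ‖Matrix.diagonal (fun i => Real.exp (t * hA.eigenvalues i))‖ * ‖star U‖ :=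
        mul_le_mul_of_nonneg_right (norm_mul_le _ _) (norm_nonneg _)
    _ ≤ 1 * Real.exp (-γ * t) * 1 := by
        apply mul_le_mul
        apply mul_le_mul (matNorm_unitary_le hUmem) hd (norm_nonneg _) zero_le_one
        · exact matNorm_unitary_le (Unitary.star_mem hUmem)
        · exact norm_nonneg _
        · positivity
    _ = Real.exp (-γ * t) := by ring

lemma hasDerivAt_matrix {f : ℝ → Matrix (Fin n) (Fin n) ℝ} {f' : Matrix (Fin n) (Fin n) ℝ}
    {t : ℝ} (h : ∀ i j, HasDerivAt (fun s => f s i j) (f' i j) t) :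
    HasDerivAt f f' t := by
  have key : HasDerivAt (fun s => ∑ i : Fin n, ∑ j : Fin n,
      Matrix.single i j (f s i j))
      (∑ i : Fin n, ∑ j : Fin n, Matrix.single i j (f' i j)) t := by
    refine HasDerivAt.fun_sum fun i _ => HasDerivAt.fun_sum fun j _ => ?_
    have heq : (fun s => Matrix.single i j (f s i j))
        = fun s => f s i j • Matrix.single i j (1:ℝ) := by
      funext s
      rw [Matrix.smul_single, smul_eq_mul, mul_one]
    rw [heq, show Matrix.single i j (f' i j)
        = f' i j • Matrix.single i j (1:ℝ) by
      rw [Matrix.smul_single, smul_eq_mul, mul_one]]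
    exact (h i j).smul_const _
  have h1 : (fun s => ∑ i : Fin n, ∑ j : Fin n, Matrix.single i j (f s i j)) = f := by
    funext s
    exact (Matrix.matrix_eq_sum_single (f s)).symm
  have h2 : (∑ i : Fin n, ∑ j : Fin n, Matrix.single i j (f' i j)) = f' :=
    (Matrix.matrix_eq_sum_single f').symm
  rwa [h1, h2] at key

end Aux

/-- If `A` is real symmetric with all eigenvalues `≤ -γ < 0`, `V` solves the
Lyapunov differential equation `V'(t) = A V(t) + V(t) Aᵀ + B Bᵀ` for `t ≥ 0` and `V*` is a
stationary solution, then `‖V(t) - V*‖₂ ≤ e^(-2γt) ‖V(0) - V*‖₂` for all `t ≥ 0`. -/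
theorem lyapunov_ode_decay_symmetric (n R : ℕ) (γ : ℝ) (hγ : 0 < γ)
    (A : Matrix (Fin n) (Fin n) ℝ) (hA : A.IsHermitian)
    (heig : ∀ k, hA.eigenvalues k ≤ -γ)
    (B : Matrix (Fin n) (Fin R) ℝ)
    (V : ℝ → Matrix (Fin n) (Fin n) ℝ) (Vstar : Matrix (Fin n) (Fin n) ℝ)
    (hV : ∀ t : ℝ, 0 ≤ t → ∀ i j,
      HasDerivAt (fun s : ℝ => V s i j) ((A * V t + V t * Aᵀ + B * Bᵀ) i j) t)
    (hVstar : A * Vstar + Vstar * Aᵀ + B * Bᵀ = 0) :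
    ∀ t : ℝ, 0 ≤ t →
      specNorm (V t - Vstar) ≤ Real.exp (-2 * γ * t) * specNorm (V 0 - Vstar) := by
  open scoped Matrix.Norms.L2Operator in
  open NormedSpace in
  have hAT : Aᵀ = A := by
    ext i j
    rw [Matrix.transpose_apply]
    conv_rhs => rw [← hA]
    simp [Matrix.conjTranspose_apply]
  rw [hAT] at hV hVstar
  set W : ℝ → Matrix (Fin n) (Fin n) ℝ := fun s => V s - Vstar with hWdef
  have hWentry : ∀ t : ℝ, 0 ≤ t → ∀ i j,
      HasDerivAt (fun s : ℝ => W s i j) ((A * W t + W t * A) i j) t := by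
    intro t ht i j
    have h1 := (hV t ht i j).sub_const (Vstar i j)
    have h2 : A * W t + W t * A
        = (A * V t + V t * A + B * Bᵀ) - (A * Vstar + Vstar * A + B * Bᵀ) := by
      simp only [hWdef]
      noncomm_ring
    have h3 : (A * W t + W t * A) i j = (A * V t + V t * A + B * Bᵀ) i j := by
      rw [h2, hVstar]
      simp
    rw [h3]
    convert h1 using 2 <;> rfl
  have hWd : ∀ t : ℝ, 0 ≤ t → HasDerivAt W (A * W t + W t * A) t := fun t ht =>
    hasDerivAt_matrix (hWentry t ht)
  have hφ : ∀ s : ℝ, HasDerivAt (fun u : ℝ => exp (-(u • A)))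
      (-(exp (-(s • A)) * A)) s := by
    intro s
    have h1 := hasDerivAt_exp_smul_const (𝕂 := ℝ) A (-s)
    have h2 := h1.scomp s (hasDerivAt_neg s)
    simpa [Function.comp_def, neg_smul] using h2
  have hcomm : ∀ s : ℝ, A * exp (-(s • A)) = exp (-(s • A)) * A := fun s =>
    (((Commute.refl A).smul_right s).neg_right.exp_right).eq
  set F : ℝ → Matrix (Fin n) (Fin n) ℝ :=
    fun s => exp (-(s • A)) * W s * exp (-(s • A)) with hFdef
  have hFd : ∀ s : ℝ, 0 ≤ s → HasDerivAt F 0 s := by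
    intro s hs
    have h := ((hφ s).mul (hWd s hs)).mul (hφ s)
    convert h using 1
    · rfl
    · rfl
    · rfl
    · rfl
    simp only [Pi.mul_apply]
    set φ := exp (-(s • A))
    have hc : A * φ = φ * A := hcomm s
    simp only [neg_mul, mul_neg, add_mul, mul_add, mul_assoc]
    rw [show W s * (φ * A) = W s * (A * φ) by rw [hc]]
    abel_nf
  intro t ht
  have key := constant_of_has_deriv_right_zero (f := F) (a := 0) (b := t)
      (fun x hx => (hFd x hx.1).continuousAt.continuousWithinAt)
      (fun x hx => (hFd x hx.1).hasDerivWithinAt)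
  have hFt : F t = F 0 := key t ⟨ht, le_refl t⟩
  have hF0 : F 0 = W 0 := by
    simp [hFdef, exp_zero]
  have hinv1 : exp (t • A) * exp (-(t • A)) = 1 := by
    rw [← Matrix.exp_add_of_commute _ _ (Commute.refl (t • A)).neg_right]
    simp [exp_zero]
  have hinv2 : exp (-(t • A)) * exp (t • A) = 1 := by
    rw [← Matrix.exp_add_of_commute _ _ (Commute.refl (t • A)).neg_left]
    simp [exp_zero]
  have hWt : W t = exp (t • A) * W 0 * exp (t • A) := by
    have h1 : exp (t • A) * F t * exp (t • A) = W t := by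
      simp only [hFdef]
      calc exp (t • A) * (exp (-(t • A)) * W t * exp (-(t • A))) * exp (t • A)
          = (exp (t • A) * exp (-(t • A))) * W t
              * (exp (-(t • A)) * exp (t • A)) := by noncomm_ring
        _ = W t := by rw [hinv1, hinv2, one_mul, mul_one]
    rw [← h1, hFt, hF0]
  have hE := matNorm_exp_le hA heig ht
  rw [specNorm_eq_norm, specNorm_eq_norm]
  calc ‖W t‖ = ‖exp (t • A) * W 0 * exp (t • A)‖ := by rw [hWt]
    _ ≤ ‖exp (t • A) * W 0‖ * ‖exp (t • A)‖ := norm_mul_le _ _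
    _ ≤ (‖exp (t • A)‖ * ‖W 0‖) * ‖exp (t • A)‖ :=
        mul_le_mul_of_nonneg_right (norm_mul_le _ _) (norm_nonneg _)
    _ ≤ (Real.exp (-γ * t) * ‖W 0‖) * Real.exp (-γ * t) := by
        apply mul_le_mul (mul_le_mul_of_nonneg_right hE (norm_nonneg _)) hE (norm_nonneg _)
        positivity
    _ = Real.exp (-2 * γ * t) * ‖W 0‖ := by
        rw [mul_right_comm, ← Real.exp_add]
        congr 1
        ring
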